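/- Let G be a finite Eulerian multigraph and let v be a vertex of degree 4 in G. Then among the three ways to split v into two vertices v_1, v_2 each inheriting two of the four edges at v, at least two of the resulting multigraphs are Eulerian (i.e., connected with all degrees even). -/

import Mathlib

open SimpleGraph

universe u w

/-- A multigraph: a type of edges together with a map assigning to each edge its
(unordered) pair of endpoints. -/
structure Multigraph (V : Type u) (E : Type w) where
  ends : E → Sym2 V

namespace Multigraph

variable {V : Type u} {E : Type w}

/-- The underlying simple graph of a multigraph. -/
def toSimple (M : Multigraph V E) : SimpleGraph V where
  Adj a b := a ≠ b ∧ ∃ e, M.ends e = s(a, b)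
  symm := by
    constructor
    rintro a b ⟨h, e, he⟩
    exact ⟨h.symm, e, by rwa [Sym2.eq_swap]⟩
  loopless := ⟨fun a h => h.1 rfl⟩

/-- A multigraph is connected if its underlying simple graph is connected. -/
def Connected (M : Multigraph V E) : Prop := M.toSimple.Connected

/-- The degree of a vertex in a multigraph; loops count twice. -/
def degree [Fintype E] [DecidableEq V] (M : Multigraph V E) (v : V) : ℕ :=
  ∑ e : E, ((if v ∈ M.ends e then 1 else 0) + (if M.ends e = s(v, v) then 1 else 0))

/-- Eulerian: connected with every vertex of even degree. -/
def Eulerian [Fintype E] [DecidableEq V] (M : Multigraph V E) : Prop :=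
  M.Connected ∧ ∀ v : V, Even (M.degree v)

/-- The `v`-split of a multigraph: replace `v` by the two vertices `Sum.inr false` and
`Sum.inr true`; an edge `e` formerly incident with `v` becomes incident with
`Sum.inr (σ e)`. -/
def splitVertex [DecidableEq V] (M : Multigraph V E) (v : V) (σ : E → Bool) :
    Multigraph ({w : V // w ≠ v} ⊕ Bool) E where
  ends e := (M.ends e).map fun w => if h : w = v then Sum.inr (σ e) else Sum.inl ⟨w, h⟩

end Multigraph

set_option linter.unusedSectionVars false

section Aux

open Multigraph Classical

variable {V : Type u} {E : Type w} [Fintype V] [Fintype E] [DecidableEq V] [DecidableEq E]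

lemma sym2_rep (z : Sym2 V) : ∃ a b, z = s(a, b) := by
  induction z using Sym2.ind with
  | _ a b => exact ⟨a, b, rfl⟩

/-- The graph `G - v`, on the subtype. -/
def Hgraph (M : Multigraph V E) (v : V) : SimpleGraph {w : V // w ≠ v} where
  Adj a b := a ≠ b ∧ ∃ e, M.ends e = s(a.1, b.1)
  symm := by
    constructor
    rintro a b ⟨h, e, he⟩
    exact ⟨h.symm, e, by rwa [Sym2.eq_swap]⟩
  loopless := ⟨fun a h => h.1 rfl⟩

variable (M : Multigraph V E) (v : V) (σ : E → Bool)

lemma split_ends (e : E) (a b : V) (h : M.ends e = s(a, b)) :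
    (M.splitVertex v σ).ends e =
      s((if ha : a = v then Sum.inr (σ e) else Sum.inl ⟨a, ha⟩),
        (if hb : b = v then Sum.inr (σ e) else Sum.inl ⟨b, hb⟩)) := by
  simp [Multigraph.splitVertex, h, Sym2.map_pair_eq]

/-- `inl` is a graph hom from `G - v` to any split. -/
lemma hom_inl {a b : {w : V // w ≠ v}} (h : (Hgraph M v).Adj a b) :
    (M.splitVertex v σ).toSimple.Adj (Sum.inl a) (Sum.inl b) := by
  obtain ⟨hne, e, he⟩ := h
  refine ⟨by simpa using hne, e, ?_⟩
  rw [split_ends M v σ e a.1 b.1 he, dif_neg a.2, dif_neg b.2]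

lemma reach_inl {a b : {w : V // w ≠ v}} (h : (Hgraph M v).Reachable a b) :
    (M.splitVertex v σ).toSimple.Reachable (Sum.inl a) (Sum.inl b) := by
  obtain ⟨p⟩ := h
  induction p with
  | nil => exact Reachable.refl _
  | cons h' p ih => exact (hom_inl M v σ h').reachable.trans ih

lemma adj_inr {e : E} {x : V} (hx : x ≠ v) (he : M.ends e = s(x, v)) :
    (M.splitVertex v σ).toSimple.Adj (Sum.inl ⟨x, hx⟩) (Sum.inr (σ e)) := by
  refine ⟨by simp, e, ?_⟩
  rw [split_ends M v σ e x v he, dif_neg hx, dif_pos rfl]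

lemma lift_walk : ∀ {x y : V} (_ : M.toSimple.Walk x y) (_ : y = v) (hx : x ≠ v),
    ∃ b, (M.splitVertex v σ).toSimple.Reachable (Sum.inl ⟨x, hx⟩) (Sum.inr b) := by
  intro x y p
  induction p with
  | nil => exact fun hy hx => absurd hy (by simpa using hx)
  | @cons x z _ h p ih =>
    intro hy hx
    by_cases hz : z = v
    · obtain ⟨hxy, e, he⟩ := h
      rw [hz] at he
      exact ⟨σ e, (adj_inr M v σ hx he).reachable⟩
    · obtain ⟨b, hb⟩ := ih hy hz
      refine ⟨b, Reachable.trans ?_ hb⟩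
      obtain ⟨hxy, e, he⟩ := h
      exact (hom_inl M v σ (a := ⟨x, hx⟩) (b := ⟨z, hz⟩) ⟨by simpa using hxy, e, he⟩).reachable

lemma reach_some_inr (hconn : M.Connected) (u : {w : V // w ≠ v} ⊕ Bool) :
    ∃ b, (M.splitVertex v σ).toSimple.Reachable u (Sum.inr b) := by
  match u with
  | Sum.inr b => exact ⟨b, Reachable.refl _⟩
  | Sum.inl ⟨x, hx⟩ =>
    obtain ⟨p⟩ := hconn.preconnected x v
    exact lift_walk M v σ p rfl hx

lemma split_connected (hconn : M.Connected)
    (h : (M.splitVertex v σ).toSimple.Reachable (Sum.inr true) (Sum.inr false)) :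
    (M.splitVertex v σ).Connected := by
  have key : ∀ u, (M.splitVertex v σ).toSimple.Reachable u (Sum.inr true) := by
    intro u
    obtain ⟨b, hb⟩ := reach_some_inr M v σ hconn u
    cases b with
    | true => exact hb
    | false => exact hb.trans h.symm
  show (M.splitVertex v σ).toSimple.Connected
  rw [SimpleGraph.connected_iff]
  exact ⟨fun a b => (key a).trans (key b).symm, ⟨Sum.inr true⟩⟩

end Aux

section Deg

open Multigraph

variable {V : Type u} {E : Type w} [Fintype V] [Fintype E] [DecidableEq V] [DecidableEq E]
variable (M : Multigraph V E) (v : V) (σ : E → Bool)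

lemma deg_inl (w : {w : V // w ≠ v}) :
    (M.splitVertex v σ).degree (Sum.inl w) = M.degree w.1 := by
  unfold Multigraph.degree
  refine Finset.sum_congr rfl fun e _ => ?_
  obtain ⟨a, b, hab⟩ := sym2_rep (M.ends e)
  rw [split_ends M v σ e a b hab, hab]
  have hw := w.2
  have hw' := Ne.symm hw
  rcases eq_or_ne a v with ha | ha <;> rcases eq_or_ne b v with hb | hb <;>
    simp [ha, hb, Sym2.mem_iff, Sym2.eq_iff, Subtype.ext_iff, hw, hw', eq_comm]
  all_goals exact if_congr (by tauto) rfl rfl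

lemma deg_inr (hnoloop : ∀ e : E, M.ends e ≠ s(v, v)) (b : Bool) :
    (M.splitVertex v σ).degree (Sum.inr b) =
      ∑ e : E, if v ∈ M.ends e ∧ σ e = b then 1 else 0 := by
  unfold Multigraph.degree
  refine Finset.sum_congr rfl fun e _ => ?_
  obtain ⟨p, q, hpq⟩ := sym2_rep (M.ends e)
  have hnl := hnoloop e
  rw [hpq] at hnl
  rw [split_ends M v σ e p q hpq, hpq]
  rcases eq_or_ne p v with hp | hp <;> rcases eq_or_ne q v with hq | hq
  · exact absurd (by rw [hp, hq]) hnl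
  · rcases eq_or_ne (σ e) b with hσ | hσ
    · simp [hp, hq, hσ, Sym2.mem_iff, Sym2.eq_iff]
    · simp [hp, hq, hσ, Ne.symm hσ, Sym2.mem_iff, Sym2.eq_iff]
  · rcases eq_or_ne (σ e) b with hσ | hσ
    · simp [hp, hq, hσ, Sym2.mem_iff, Sym2.eq_iff]
    · simp [hp, hq, hσ, Ne.symm hσ, Sym2.mem_iff, Sym2.eq_iff]
  · simp [hp, hq, Ne.symm hp, Ne.symm hq, Sym2.mem_iff, Sym2.eq_iff]

end Deg

section Main

open Multigraph Classical

variable {V : Type u} {E : Type w} [Fintype V] [Fintype E] [DecidableEq V] [DecidableEq E]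
variable (M : Multigraph V E) (v : V)

lemma other_end (d : E) (hv : v ∈ M.ends d) (hnl : M.ends d ≠ s(v, v)) :
    ∃ y, ∃ _ : y ≠ v, M.ends d = s(y, v) := by
  obtain ⟨p, q, hpq⟩ := sym2_rep (M.ends d)
  rw [hpq] at hv hnl ⊢
  rcases Sym2.mem_iff.1 hv with h | h
  · have hq : q ≠ v := fun hq => hnl (by rw [← h, hq])
    exact ⟨q, hq, by rw [← h, Sym2.eq_swap]⟩
  · have hp : p ≠ v := fun hp => hnl (by rw [← h, hp])
    exact ⟨p, hp, by rw [← h]⟩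

lemma end_unique {d : E} {y z : V} (hy : y ≠ v) (h1 : M.ends d = s(y, v))
    (h2 : M.ends d = s(z, v)) : y = z := by
  rw [h1] at h2
  rcases Sym2.eq_iff.1 h2 with ⟨h, _⟩ | ⟨h, _⟩
  · exact h
  · exact absurd h hy

lemma not_reach_H (σ : E → Bool)
    (hne : ¬ (M.splitVertex v σ).toSimple.Reachable (Sum.inr true) (Sum.inr false))
    {x y : V} (hx : x ≠ v) (hy : y ≠ v) {e d : E} (he : M.ends e = s(x, v))
    (hd : M.ends d = s(y, v)) (hσe : σ e = true) (hσd : σ d = false) :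
    ¬ (Hgraph M v).Reachable ⟨x, hx⟩ ⟨y, hy⟩ := by
  intro hr
  apply hne
  have h1 := (adj_inr M v σ hx he).reachable
  have h2 := (adj_inr M v σ hy hd).reachable
  rw [hσe] at h1
  rw [hσd] at h2
  exact h1.symm.trans ((reach_inl M v σ hr).trans h2)

lemma even_cast {n : ℕ} (h : Even n) : (n : ZMod 2) = 0 := by
  obtain ⟨k, hk⟩ := h
  subst hk
  push_cast
  rw [← two_mul, show (2 : ZMod 2) = 0 by decide, zero_mul]

lemma cast_ite (c : Prop) [Decidable c] :
    ((if c then (1 : ℕ) else 0 : ℕ) : ZMod 2) = if c then 1 else 0 := by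
  by_cases h : c <;> simp [h]

lemma parity (heven : ∀ w, Even (M.degree w)) (e₁ a b c : E)
    (hinc : ∀ e, v ∈ M.ends e ↔ e = e₁ ∨ e = a ∨ e = b ∨ e = c)
    {x₁ : V} (hx₁ : x₁ ≠ v) (he₁ : M.ends e₁ = s(x₁, v))
    (hnr : ∀ (y : V) (hy : y ≠ v) (d : E), (d = a ∨ d = b ∨ d = c) → M.ends d = s(y, v) →
      ¬ (Hgraph M v).Reachable ⟨x₁, hx₁⟩ ⟨y, hy⟩) : False := by
  classical
  set C : Finset V :=
    Finset.univ.filter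
      (fun w => ∃ h : w ≠ v, (Hgraph M v).Reachable ⟨x₁, hx₁⟩ ⟨w, h⟩) with hC
  have memC : ∀ w : V, w ∈ C ↔ ∃ h : w ≠ v, (Hgraph M v).Reachable ⟨x₁, hx₁⟩ ⟨w, h⟩ := by
    intro w
    simp [hC]
  have hx₁C : x₁ ∈ C := (memC x₁).2 ⟨hx₁, Reachable.refl _⟩
  have hvC : v ∉ C := fun h => ((memC v).1 h).choose rfl
  have key : ∀ e : E,
      (∑ w ∈ C, ((if w ∈ M.ends e then (1 : ZMod 2) else 0) +
        (if M.ends e = s(w, w) then 1 else 0))) = if e = e₁ then 1 else 0 := by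
    intro e
    obtain ⟨p, q, hpq⟩ := sym2_rep (M.ends e)
    rw [hpq]
    by_cases hpq' : p = q
    · -- loop edge: contributes 0 and e ≠ e₁
      subst hpq'
      have he2 : e ≠ e₁ := by
        rintro rfl
        rw [he₁] at hpq
        rcases Sym2.eq_iff.1 hpq with ⟨h1', h2'⟩ | ⟨h1', h2'⟩ <;>
          exact hx₁ (h1'.trans h2'.symm)
      rw [if_neg he2]
      apply Finset.sum_eq_zero
      intro w hw
      have h1 : (w ∈ s(p, p)) ↔ w = p := by simp [Sym2.mem_iff]
      have h2 : (s(p, p) = s(w, w)) ↔ w = p := by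
        rw [Sym2.eq_iff]
        constructor
        · rintro (⟨h, _⟩ | ⟨h, _⟩) <;> exact h.symm
        · rintro rfl; exact Or.inl ⟨rfl, rfl⟩
      rw [if_congr h1 rfl rfl, if_congr h2 rfl rfl]
      by_cases h : w = p
      · rw [if_pos h]; decide
      · rw [if_neg h]; decide
    · have hS2 : (∑ w ∈ C, (if s(p, q) = s(w, w) then (1 : ZMod 2) else 0)) = 0 :=
        Finset.sum_eq_zero fun w hw => by
          refine if_neg ?_
          rw [Sym2.eq_iff]
          rintro (⟨h1', h2'⟩ | ⟨h1', h2'⟩) <;> exact hpq' (h1'.trans h2'.symm)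
      have hS1 : (∑ w ∈ C, (if w ∈ s(p, q) then (1 : ZMod 2) else 0)) =
          (if p ∈ C then 1 else 0) + (if q ∈ C then 1 else 0) := by
        have hw : ∀ w ∈ C, (if w ∈ s(p, q) then (1 : ZMod 2) else 0) =
            (if w = p then (1 : ZMod 2) else 0) + (if w = q then 1 else 0) := by
          intro w _
          by_cases h1' : w = p <;> by_cases h2' : w = q
          · exact absurd (h1'.symm.trans h2') hpq'
          · simp [h1', h2', Sym2.mem_iff, hpq', Ne.symm hpq']
          · simp [h1', h2', Sym2.mem_iff, hpq', Ne.symm hpq']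
          · simp [h1', h2', Sym2.mem_iff, hpq', Ne.symm hpq']
        rw [Finset.sum_congr rfl hw, Finset.sum_add_distrib,
          Finset.sum_ite_eq' C p (fun _ => (1 : ZMod 2)),
          Finset.sum_ite_eq' C q (fun _ => (1 : ZMod 2))]
      rw [Finset.sum_add_distrib, hS1, hS2, add_zero]
      by_cases hp : p ∈ C <;> by_cases hq : q ∈ C
      · have he2 : e ≠ e₁ := by
          rintro rfl
          rw [he₁] at hpq
          rcases Sym2.eq_iff.1 hpq with ⟨h1', h2'⟩ | ⟨h1', h2'⟩
          · exact hvC (by rwa [← h2'] at hq)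
          · exact hvC (by rwa [← h2'] at hp)
        rw [if_pos hp, if_pos hq, if_neg he2]; decide
      · -- p in C, q not: q = v and e = e₁
        obtain ⟨hpv, hreachp⟩ := (memC p).1 hp
        have hqv : q = v := by
          by_contra hqv
          refine hq ((memC q).2 ⟨hqv, hreachp.trans (Adj.reachable ?_)⟩)
          exact ⟨fun hh => hpq' (congrArg Subtype.val hh), e, hpq⟩
        rw [hqv] at hpq
        rcases (hinc e).1 (by rw [hpq]; exact Sym2.mem_mk_right _ _) with he' | he' | he' | he'
        · rw [if_pos hp, if_neg hq, if_pos he']; decide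
        · exact absurd hreachp (hnr p hpv e (Or.inl he') hpq)
        · exact absurd hreachp (hnr p hpv e (Or.inr (Or.inl he')) hpq)
        · exact absurd hreachp (hnr p hpv e (Or.inr (Or.inr he')) hpq)
      · -- q in C, p not: p = v and e = e₁
        obtain ⟨hqv', hreachq⟩ := (memC q).1 hq
        have hpv : p = v := by
          by_contra hpv
          refine hp ((memC p).2 ⟨hpv, hreachq.trans (Adj.reachable ?_)⟩)
          exact ⟨fun hh => hpq' (congrArg Subtype.val hh).symm, e, by rw [hpq, Sym2.eq_swap]⟩
        rw [hpv, Sym2.eq_swap] at hpq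
        rcases (hinc e).1 (by rw [hpq]; exact Sym2.mem_mk_right _ _) with he' | he' | he' | he'
        · rw [if_neg hp, if_pos hq, if_pos he']; decide
        · exact absurd hreachq (hnr q hqv' e (Or.inl he') hpq)
        · exact absurd hreachq (hnr q hqv' e (Or.inr (Or.inl he')) hpq)
        · exact absurd hreachq (hnr q hqv' e (Or.inr (Or.inr he')) hpq)
      · have he2 : e ≠ e₁ := by
          rintro rfl
          rw [he₁] at hpq
          rcases Sym2.eq_iff.1 hpq with ⟨h1', _⟩ | ⟨h1', _⟩
          · exact hp (by rwa [h1'] at hx₁C)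
          · exact hq (by rwa [h1'] at hx₁C)
        rw [if_neg hp, if_neg hq, if_neg he2]; decide
  have h1 : ((∑ w ∈ C, M.degree w : ℕ) : ZMod 2) = 0 := by
    rw [Nat.cast_sum]
    exact Finset.sum_eq_zero fun w _ => even_cast (heven w)
  have h2 : ((∑ w ∈ C, M.degree w : ℕ) : ZMod 2) = 1 := by
    rw [Nat.cast_sum]
    have hwdeg : ∀ w ∈ C, ((M.degree w : ℕ) : ZMod 2) =
        ∑ e : E, ((if w ∈ M.ends e then (1 : ZMod 2) else 0) +
          (if M.ends e = s(w, w) then 1 else 0)) := by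
      intro w _
      unfold Multigraph.degree
      rw [Nat.cast_sum]
      exact Finset.sum_congr rfl fun e _ => by rw [Nat.cast_add, cast_ite, cast_ite]
    rw [Finset.sum_congr rfl hwdeg, Finset.sum_comm, Finset.sum_congr rfl fun e _ => key e,
      Finset.sum_ite_eq' Finset.univ e₁ (fun _ => (1 : ZMod 2)), if_pos (Finset.mem_univ e₁)]
  exact absurd (h1.symm.trans h2) (by decide)

lemma split_even (e₁ a b c : E)
    (h1a : e₁ ≠ a) (h1b : e₁ ≠ b) (h1c : e₁ ≠ c) (hab : a ≠ b) (hac : a ≠ c) (hbc : b ≠ c)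
    (hinc : ∀ e, v ∈ M.ends e ↔ e = e₁ ∨ e = a ∨ e = b ∨ e = c)
    (hnoloop : ∀ e, M.ends e ≠ s(v, v)) (heven : ∀ w, Even (M.degree w)) :
    ∀ u, Even ((M.splitVertex v (fun e => decide (e = e₁ ∨ e = a))).degree u) := by
  intro u
  match u with
  | Sum.inl w => rw [deg_inl]; exact heven w.1
  | Sum.inr bb =>
    rw [deg_inr M v _ hnoloop]
    have hsub : (∑ e : E, if v ∈ M.ends e ∧ (decide (e = e₁ ∨ e = a)) = bb then 1 else 0) =
        ∑ e ∈ ({e₁, a, b, c} : Finset E),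
          (if v ∈ M.ends e ∧ (decide (e = e₁ ∨ e = a)) = bb then 1 else 0) := by
      refine (Finset.sum_subset (Finset.subset_univ _) fun e _ he => ?_).symm
      refine if_neg fun hcon => he ?_
      have h4 := (hinc e).1 hcon.1
      simp only [Finset.mem_insert, Finset.mem_singleton]
      tauto
    rw [hsub, Finset.sum_insert (by simp [h1a, h1b, h1c]),
      Finset.sum_insert (by simp [hab, hac]), Finset.sum_insert (by simp [hbc]),
      Finset.sum_singleton]
    have hv1 : v ∈ M.ends e₁ := (hinc e₁).2 (Or.inl rfl)
    have hva : v ∈ M.ends a := (hinc a).2 (by tauto)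
    have hvb : v ∈ M.ends b := (hinc b).2 (by tauto)
    have hvc : v ∈ M.ends c := (hinc c).2 (by tauto)
    cases bb <;>
      simp [hv1, hva, hvb, hvc, Ne.symm h1a, Ne.symm h1b, Ne.symm h1c, Ne.symm hab,
        Ne.symm hac, Ne.symm hbc, hab, hac, hbc]

lemma main_pair (hM : M.Eulerian) (e₁ a b c : E)
    (h1a : e₁ ≠ a) (h1b : e₁ ≠ b) (h1c : e₁ ≠ c) (hab : a ≠ b) (hac : a ≠ c) (hbc : b ≠ c)
    (hinc : ∀ e, v ∈ M.ends e ↔ e = e₁ ∨ e = a ∨ e = b ∨ e = c)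
    (hnoloop : ∀ e, M.ends e ≠ s(v, v)) :
    (M.splitVertex v fun e => decide (e = e₁ ∨ e = a)).Eulerian ∨
      (M.splitVertex v fun e => decide (e = e₁ ∨ e = b)).Eulerian := by
  by_contra hcon
  push_neg at hcon
  obtain ⟨hA, hB⟩ := hcon
  obtain ⟨hconn, heven⟩ := hM
  have hincB : ∀ e, v ∈ M.ends e ↔ e = e₁ ∨ e = b ∨ e = a ∨ e = c :=
    fun e => (hinc e).trans (by tauto)
  have evenA := split_even M v e₁ a b c h1a h1b h1c hab hac hbc hinc hnoloop heven
  have evenB := split_even M v e₁ b a c h1b h1a h1c (Ne.symm hab) hbc hac hincB hnoloop heven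
  have hnrA : ¬ (M.splitVertex v fun e => decide (e = e₁ ∨ e = a)).toSimple.Reachable
      (Sum.inr true) (Sum.inr false) :=
    fun h => hA ⟨split_connected M v _ hconn h, evenA⟩
  have hnrB : ¬ (M.splitVertex v fun e => decide (e = e₁ ∨ e = b)).toSimple.Reachable
      (Sum.inr true) (Sum.inr false) :=
    fun h => hB ⟨split_connected M v _ hconn h, evenB⟩
  obtain ⟨x₁, hx₁, he₁x⟩ := other_end M v e₁ ((hinc e₁).2 (Or.inl rfl)) (hnoloop e₁)
  obtain ⟨xa, hxa, hax⟩ := other_end M v a ((hinc a).2 (by tauto)) (hnoloop a)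
  obtain ⟨xb, hxb, hbx⟩ := other_end M v b ((hinc b).2 (by tauto)) (hnoloop b)
  obtain ⟨xc, hxc, hcx⟩ := other_end M v c ((hinc c).2 (by tauto)) (hnoloop c)
  have nAb : ¬ (Hgraph M v).Reachable ⟨x₁, hx₁⟩ ⟨xb, hxb⟩ :=
    not_reach_H M v _ hnrA hx₁ hxb he₁x hbx (by simp) (by simp [Ne.symm h1b, Ne.symm hab])
  have nAc : ¬ (Hgraph M v).Reachable ⟨x₁, hx₁⟩ ⟨xc, hxc⟩ :=
    not_reach_H M v _ hnrA hx₁ hxc he₁x hcx (by simp) (by simp [Ne.symm h1c, Ne.symm hac])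
  have nBa : ¬ (Hgraph M v).Reachable ⟨x₁, hx₁⟩ ⟨xa, hxa⟩ :=
    not_reach_H M v _ hnrB hx₁ hxa he₁x hax (by simp) (by simp [Ne.symm h1a, hab])
  refine parity M v heven e₁ a b c hinc hx₁ he₁x ?_
  intro y hy d hd hdy
  rcases hd with rfl | rfl | rfl
  · have hyx : (⟨y, hy⟩ : {w : V // w ≠ v}) = ⟨xa, hxa⟩ :=
      Subtype.ext (end_unique M v hy hdy hax)
    rw [hyx]; exact nBa
  · have hyx : (⟨y, hy⟩ : {w : V // w ≠ v}) = ⟨xb, hxb⟩ :=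
      Subtype.ext (end_unique M v hy hdy hbx)
    rw [hyx]; exact nAb
  · have hyx : (⟨y, hy⟩ : {w : V // w ≠ v}) = ⟨xc, hxc⟩ :=
      Subtype.ext (end_unique M v hy hdy hcx)
    rw [hyx]; exact nAc

end Main

/-- If `v` is a vertex of degree 4 of a finite Eulerian multigraph,
with incident edges `e₁, e₂, e₃, e₄` and no loop at `v`, then among the three splits of
`v` into two vertices of degree 2 at least two are Eulerian. -/
theorem stmt_12 {V : Type u} {E : Type w} [Fintype V] [Fintype E] [DecidableEq V]
    [DecidableEq E] (M : Multigraph V E) (hM : M.Eulerian) (v : V) (e₁ e₂ e₃ e₄ : E)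
    (hnd : ([e₁, e₂, e₃, e₄] : List E).Nodup)
    (hinc : ∀ e : E, v ∈ M.ends e ↔ e ∈ [e₁, e₂, e₃, e₄])
    (hnoloop : ∀ e : E, M.ends e ≠ s(v, v)) :
    let split : E → Multigraph ({w : V // w ≠ v} ⊕ Bool) E := fun e' =>
      M.splitVertex v fun e => decide (e = e₁ ∨ e = e')
    ((split e₂).Eulerian ∧ (split e₃).Eulerian) ∨
      ((split e₂).Eulerian ∧ (split e₄).Eulerian) ∨
        ((split e₃).Eulerian ∧ (split e₄).Eulerian) := by
  intro split
  simp only [List.nodup_cons, List.mem_cons, List.not_mem_nil, or_false, not_or,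
    List.nodup_nil, and_true, List.mem_singleton] at hnd
  obtain ⟨⟨h12, h13, h14⟩, ⟨h23, h24⟩, h34, -⟩ := hnd
  have hinc' : ∀ e, v ∈ M.ends e ↔ e = e₁ ∨ e = e₂ ∨ e = e₃ ∨ e = e₄ := by
    intro e
    rw [hinc e]
    simp
  have hA := main_pair M v hM e₁ e₂ e₃ e₄ h12 h13 h14 h23 h24 h34 hinc' hnoloop
  have hB := main_pair M v hM e₁ e₂ e₄ e₃ h12 h14 h13 h24 h23 (Ne.symm h34)
    (fun e => (hinc' e).trans (by tauto)) hnoloop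
  have hC := main_pair M v hM e₁ e₃ e₄ e₂ h13 h14 h12 h34 (Ne.symm h23) (Ne.symm h24)
    (fun e => (hinc' e).trans (by tauto)) hnoloop
  simp only [split]
  tauto
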